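/- For two agents with additive utilities over indivisible goods, an ex-ante envy-free and ex-post EFX randomized allocation always exists; moreover it can be taken to be supported on at most two integral allocations, namely a fair-coin lottery over an allocation A^1 that is EFX under u_1 and an allocation A^2 that is EFX under u_2, with each agent picking her preferred bundle in the allocation indexed by the other agent. -/

import Mathlib

section
open Finset

lemma exists_efx_split {G : Type*} [Fintype G] [DecidableEq G]
    (u : G → ℝ) (h : ∀ g, 0 ≤ u g) :
    ∃ X : Finset G, (∑ x ∈ Xᶜ, u x) ≤ (∑ x ∈ X, u x) ∧
      (∀ Y : Finset G,
        (∑ x ∈ X, u x) - (∑ x ∈ Xᶜ, u x) ≤ |(∑ x ∈ Y, u x) - (∑ x ∈ Yᶜ, u x)|) ∧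
      (∀ g ∈ X, (∑ x ∈ X, u x) - u g ≤ ∑ x ∈ Xᶜ, u x) ∧
      (∀ g ∈ Xᶜ, (∑ x ∈ Xᶜ, u x) - u g ≤ ∑ x ∈ X, u x) := by
  classical
  set su : Finset G → ℝ := fun X => ∑ x ∈ X, u x with hsu
  have hS0 : su (univ : Finset G)ᶜ ≤ su univ := by
    simp only [hsu, compl_univ, sum_empty]
    exact sum_nonneg fun x _ => h x
  set S : Finset (Finset G) := {X ∈ (univ : Finset (Finset G)) | su Xᶜ ≤ su X} with hS
  have hSne : S.Nonempty :=
    ⟨univ, by simp only [hS, mem_filter, mem_univ, true_and]; exact hS0⟩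
  obtain ⟨X0, hX0S, hX0min⟩ := S.exists_min_image (fun X => su X - su Xᶜ) hSne
  set d : ℝ := su X0 - su X0ᶜ with hd
  set T : Finset (Finset G) := {X ∈ S | su X - su Xᶜ = d} with hT
  have hTne : T.Nonempty := ⟨X0, by rw [hT, mem_filter]; exact ⟨hX0S, rfl⟩⟩
  obtain ⟨X, hXT, hXcard⟩ := T.exists_min_image (fun X => X.card) hTne
  have hXS : X ∈ S := (mem_filter.mp hXT).1
  have hXd : su X - su Xᶜ = d := (mem_filter.mp hXT).2
  have hXle : su Xᶜ ≤ su X := (mem_filter.mp hXS).2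
  have hmin : ∀ Y ∈ S, d ≤ su Y - su Yᶜ := fun Y hY => hX0min Y hY
  refine ⟨X, hXle, ?_, ?_, ?_⟩
  · intro Y
    rcases le_total (su Yᶜ) (su Y) with hY | hY
    · have : Y ∈ S := by simp [hS, hY]
      have := hmin Y this
      rw [abs_of_nonneg (by linarith)]
      linarith
    · have hYmem : Yᶜ ∈ S := by simp [hS, hY]
      have := hmin Yᶜ hYmem
      rw [compl_compl] at this
      rw [abs_of_nonpos (by linarith)]
      linarith
  · intro g hg
    by_contra hvio
    push_neg at hvio
    have hgc : g ∉ Xᶜ := by simp [hg]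
    have he : su (X.erase g) = su X - u g := Finset.sum_erase_eq_sub hg
    have hec : su (X.erase g)ᶜ = su Xᶜ + u g := by
      rw [hsu]
      simp only [Finset.compl_erase]
      rw [Finset.sum_insert hgc]
      ring
    have hgd : u g < d := by rw [← hXd]; linarith
    rcases le_total (su (X.erase g)ᶜ) (su (X.erase g)) with hcase | hcase
    · have hmem : X.erase g ∈ S := by
        simp only [hS, mem_filter, mem_univ, true_and]
        rw [Finset.compl_erase]
        rw [Finset.compl_erase] at hcase
        exact hcase
      have h1 := hmin _ hmem
      rw [he, hec] at h1
      have hg0 : u g = 0 := le_antisymm (by rw [← hXd] at h1; linarith) (h g)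
      have hmemT : X.erase g ∈ T := by
        rw [hT, mem_filter]
        exact ⟨hmem, by rw [he, hec, hg0]; rw [← hXd]; ring⟩
      have := hXcard _ hmemT
      rw [Finset.card_erase_of_mem hg] at this
      have : 0 < X.card := Finset.card_pos.mpr ⟨g, hg⟩
      omega
    · have hmem : (X.erase g)ᶜ ∈ S := by
        simp only [hS, mem_filter, mem_univ, true_and, compl_compl]
        exact hcase
      have h1 := hmin _ hmem
      rw [compl_compl, he, hec] at h1
      rw [← hXd] at hgd
      linarith
  · intro g hg
    have := h g
    linarith

end

/-- For two agents with additive utilities over indivisible goods there is a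
randomized allocation, supported on two integral allocations A^1 = (A1, B1) and
A^2 = (A2, B2) realized with probability 1/2 each, such that A^1 is EFX under u₁, A^2 is
EFX under u₂, in each realization A^i the other agent receives her preferred bundle
(agent 1 gets A1, A2; agent 2 gets B1, B2), every realized allocation is EFX for the
profile (u₁, u₂) (ex-post EFX), and the lottery is ex-ante envy-free. -/
theorem stmt_18 {G : Type*} [Fintype G] [DecidableEq G]
    (u1 u2 : G → ℝ) (h1 : ∀ g, 0 ≤ u1 g) (h2 : ∀ g, 0 ≤ u2 g) :
    ∃ A1 B1 A2 B2 : Finset G,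
      Disjoint A1 B1 ∧ A1 ∪ B1 = Finset.univ ∧
      Disjoint A2 B2 ∧ A2 ∪ B2 = Finset.univ ∧
      -- A^1 is EFX under u₁ and A^2 is EFX under u₂ (both directions)
      (∀ g ∈ B1, (∑ x ∈ B1, u1 x) - u1 g ≤ ∑ x ∈ A1, u1 x) ∧
      (∀ g ∈ A1, (∑ x ∈ A1, u1 x) - u1 g ≤ ∑ x ∈ B1, u1 x) ∧
      (∀ g ∈ B2, (∑ x ∈ B2, u2 x) - u2 g ≤ ∑ x ∈ A2, u2 x) ∧
      (∀ g ∈ A2, (∑ x ∈ A2, u2 x) - u2 g ≤ ∑ x ∈ B2, u2 x) ∧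
      -- each agent picks her preferred bundle in the allocation indexed by the other agent
      (∑ x ∈ A1, u2 x ≤ ∑ x ∈ B1, u2 x) ∧
      (∑ x ∈ B2, u1 x ≤ ∑ x ∈ A2, u1 x) ∧
      -- ex-post EFX for the profile (u₁, u₂) in both realizations
      (∀ g ∈ A1, (∑ x ∈ A1, u2 x) - u2 g ≤ ∑ x ∈ B1, u2 x) ∧
      (∀ g ∈ B2, (∑ x ∈ B2, u1 x) - u1 g ≤ ∑ x ∈ A2, u1 x) ∧
      -- ex-ante envy-freeness of the fair-coin lottery
      ((∑ x ∈ B1, u1 x) + ∑ x ∈ B2, u1 x) / 2 ≤ ((∑ x ∈ A1, u1 x) + ∑ x ∈ A2, u1 x) / 2 ∧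
      ((∑ x ∈ A1, u2 x) + ∑ x ∈ A2, u2 x) / 2 ≤ ((∑ x ∈ B1, u2 x) + ∑ x ∈ B2, u2 x) / 2 := by
  classical
  obtain ⟨X1, hX1le, hX1min, hX1a, hX1b⟩ := exists_efx_split u1 h1
  obtain ⟨X2, hX2le, hX2min, hX2a, hX2b⟩ := exists_efx_split u2 h2
  -- bound from the minimality of X1 at the partition (X2, X2ᶜ) for u1,
  -- and of X2 at (X1, X1ᶜ) for u2
  have hb1 := hX1min X2
  have hb2 := hX2min X1
  rcases le_total (∑ x ∈ X1, u2 x) (∑ x ∈ X1ᶜ, u2 x) with hc1 | hc1 <;>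
  rcases le_total (∑ x ∈ X2ᶜ, u1 x) (∑ x ∈ X2, u1 x) with hc2 | hc2
  · -- A1 = X1, B1 = X1ᶜ ; A2 = X2, B2 = X2ᶜ
    refine ⟨X1, X1ᶜ, X2, X2ᶜ, disjoint_compl_right, (by simp),
      disjoint_compl_right, (by simp),
      hX1b, hX1a, hX2b, hX2a, hc1, hc2, ?_, ?_, ?_, ?_⟩
    · intro g hg; have := h2 g; linarith
    · intro g hg; have := h1 g; linarith
    · linarith
    · rw [abs_of_nonpos (by linarith)] at hb2; linarith
  · -- A1 = X1, B1 = X1ᶜ ; A2 = X2ᶜ, B2 = X2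
    refine ⟨X1, X1ᶜ, X2ᶜ, X2, disjoint_compl_right, (by simp),
      disjoint_compl_left, (by simp [Finset.union_comm]),
      hX1b, hX1a, ?_, ?_, hc1, hc2, ?_, ?_, ?_, ?_⟩
    · intro g hg; have := hX2a g hg; linarith
    · intro g hg; have := hX2b g hg; linarith
    · intro g hg; have := h2 g; linarith
    · intro g hg; have := h1 g; linarith
    · linarith
    · linarith
  · -- A1 = X1ᶜ, B1 = X1 ; A2 = X2, B2 = X2ᶜ
    refine ⟨X1ᶜ, X1, X2, X2ᶜ, disjoint_compl_left, (by simp [Finset.union_comm]),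
      disjoint_compl_right, (by simp),
      hX1a, hX1b, hX2b, hX2a, hc1, hc2, ?_, ?_, ?_, ?_⟩
    · intro g hg; have := h2 g; linarith
    · intro g hg; have := h1 g; linarith
    · rw [abs_of_nonneg (by linarith)] at hb1; linarith
    · rw [abs_of_nonneg (by linarith)] at hb2; linarith
  · -- A1 = X1ᶜ, B1 = X1 ; A2 = X2ᶜ, B2 = X2
    refine ⟨X1ᶜ, X1, X2ᶜ, X2, disjoint_compl_left, (by simp [Finset.union_comm]),
      disjoint_compl_left, (by simp [Finset.union_comm]),
      hX1a, hX1b, ?_, ?_, hc1, hc2, ?_, ?_, ?_, ?_⟩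
    · intro g hg; have := hX2a g hg; linarith
    · intro g hg; have := hX2b g hg; linarith
    · intro g hg; have := h2 g; linarith
    · intro g hg; have := h1 g; linarith
    · rw [abs_of_nonpos (by linarith)] at hb1; linarith
    · linarith
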